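/- Let β ∈ (1,2) and k ≥ 1. Then β > α_k if and only if (T_1^{k-1} ∘ T_0)(1/β) > 1/(β(β-1)), where α_k is the unique root in (1,2) of x^{k+1} - 2x^k + x - 1 = 0, T_0(x) = βx and T_1(x) = βx - 1. -/

import Mathlib

def T0 (β x : ℝ) : ℝ := β * x
def T1 (β x : ℝ) : ℝ := β * x - 1

lemma iter_T1_one (β : ℝ) (hβ : β - 1 ≠ 0) (n : ℕ) :
    (T1 β)^[n] 1 = (β^n * (β-2) + 1)/(β-1) := by
  induction n with
  | zero => field_simp; simp only [Function.iterate_zero, id_eq]; ring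
  | succ n ih =>
    rw [Function.iterate_succ_apply', ih, T1]
    field_simp
    ring

lemma g_mono (k : ℕ) (hk : 1 ≤ k) :
    StrictMonoOn (fun x : ℝ => x - 2 + (x-1)/x^k) (Set.Ioi 0) := by
  apply strictMonoOn_of_deriv_pos (convex_Ioi 0)
  · apply ContinuousOn.add (by fun_prop)
    exact ContinuousOn.div (by fun_prop) (by fun_prop)
      (fun x hx => pow_ne_zero _ (ne_of_gt hx))
  · intro x hx
    rw [interior_Ioi] at hx
    have hx0 : (0:ℝ) < x := hx
    have hxk : x^k ≠ 0 := pow_ne_zero _ (ne_of_gt hx0)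
    have hd : HasDerivAt (fun x : ℝ => x - 2 + (x-1)/x^k)
        (1 + ((1 * x^k - (x-1) * ((k:ℝ) * x^(k-1))) / (x^k)^2)) x := by
      have h1 : HasDerivAt (fun x : ℝ => x - 2) 1 x := by
        simpa using (hasDerivAt_id x).sub_const 2
      have h2 : HasDerivAt (fun x : ℝ => (x-1)/x^k)
          ((1 * x^k - (x-1) * ((k:ℝ) * x^(k-1))) / (x^k)^2) x :=
        HasDerivAt.div ((hasDerivAt_id x).sub_const 1) (hasDerivAt_pow k x) hxk
      exact h1.add h2
    rw [hd.deriv]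
    have hkey : 0 < (x^k)^2 + (1 * x^k - (x-1) * ((k:ℝ) * x^(k-1))) := by
      obtain ⟨m, rfl⟩ := Nat.exists_eq_add_of_le hk
      have hfac : (x^(1+m))^2 + (1 * x^(1+m) - (x-1) * (((1+m:ℕ):ℝ) * x^((1+m)-1)))
          = x^m * (x^(1+m+1) + x - (x-1) * ((1+m:ℕ):ℝ)) := by
        rw [show (1+m)-1 = m from by omega]
        push_cast
        ring
      rw [hfac]
      apply mul_pos (pow_pos hx0 m)
      have hber : 1 + (((1+m+1:ℕ)):ℝ) * (x-1) ≤ x^(1+m+1) := by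
        have := one_add_mul_le_pow (a := x - 1) (by linarith) (1+m+1)
        rw [show (1 + (x - 1)) = x by ring] at this
        exact_mod_cast this
      push_cast at hber ⊢
      nlinarith
    have heq : 1 + ((1 * x^k - (x-1) * ((k:ℝ) * x^(k-1))) / (x^k)^2)
        = ((x^k)^2 + (1 * x^k - (x-1) * ((k:ℝ) * x^(k-1)))) / (x^k)^2 := by
      field_simp
    rw [heq]
    exact div_pos hkey (by positivity)

theorem gt_alpha_iff (β : ℝ) (hβ : β ∈ Set.Ioo (1:ℝ) 2) (k : ℕ) (hk : 1 ≤ k)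
    (α : ℝ) (hα : α ∈ Set.Ioo (1:ℝ) 2) (hroot : α^(k+1) - 2*α^k + α - 1 = 0) :
    β > α ↔ (T1 β)^[k-1] (T0 β (1/β)) > 1/(β*(β-1)) := by
  obtain ⟨hβ1, hβ2⟩ := hβ
  obtain ⟨hα1, hα2⟩ := hα
  have hβ0 : (0:ℝ) < β := by linarith
  have hT0 : T0 β (1/β) = 1 := by rw [T0]; field_simp
  rw [hT0, iter_T1_one β (by intro h; linarith [sub_eq_zero.mp h]) (k-1)]
  have hαk : (0:ℝ) < α^k := pow_pos (by linarith) k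
  have hβk : (0:ℝ) < β^k := pow_pos hβ0 k
  set g := fun x : ℝ => x - 2 + (x-1)/x^k with hg
  have hgα : g α = 0 := by
    have : g α = (α^(k+1) - 2*α^k + α - 1)/α^k := by
      simp only [hg]
      field_simp
      ring
    rw [this, hroot, zero_div]
  have hiff1 : β > α ↔ 0 < g β := by
    rw [← hgα]
    exact ((g_mono k hk).lt_iff_lt (Set.mem_Ioi.mpr (by linarith)) (Set.mem_Ioi.mpr hβ0)).symm
  have hgβ : g β = (β^(k+1) - 2*β^k + β - 1)/β^k := by
    simp only [hg]
    field_simp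
    ring
  have hiff2 : (0 < g β) ↔ 0 < β^(k+1) - 2*β^k + β - 1 := by
    rw [hgβ]
    exact div_pos_iff_of_pos_right hβk
  rw [hiff1, hiff2, gt_iff_lt, div_lt_div_iff₀ (by nlinarith) (by linarith)]
  have hbk : β^k = β^(k-1) * β := by
    rw [← pow_succ]
    congr 1
    omega
  have hbk1 : β^(k+1) = β^(k-1) * β * β := by
    rw [← pow_succ, ← pow_succ]
    congr 1
    omega
  rw [hbk, hbk1]
  constructor <;> intro h <;> nlinarith [pow_pos hβ0 (k-1)]
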